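/- Suppose L₀ is a sequential contraction of L. If L is nilpotent then L₀ is nilpotent; moreover the nilpotency rank does not increase, in the precise form: for every l : ℕ, if lowerCentralSeries ℝ L L l = ⊥ then lowerCentralSeries ℝ L₀ L₀ l = ⊥. -/

import Mathlib

open Filter Module

/-- `L₀` is a sequential contraction of the real Lie algebra `L`: there is a sequence of
real-linear equivalences `T p : L ≃ₗ[ℝ] L₀` such that the transported brackets converge to the
bracket of `L₀`. -/
def IsSequentialContraction (L L₀ : Type*) [LieRing L] [LieAlgebra ℝ L]
    [LieRing L₀] [LieAlgebra ℝ L₀] [TopologicalSpace L₀] : Prop :=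
  ∃ T : ℕ → (L ≃ₗ[ℝ] L₀), ∀ x y : L₀,
    Tendsto (fun p => T p ⁅(T p).symm x, (T p).symm y⁆) atTop (nhds ⁅x, y⁆)

/-- Iterated application of a binary operation along a list. -/
def nestedF {M : Type*} (f : M → M → M) : List M → M → M
  | [], m => m
  | x :: xs, m => f x (nestedF f xs m)

lemma tendsto_bilin {V : Type*} [AddCommGroup V] [Module ℝ V] [Module.Finite ℝ V]
    [TopologicalSpace V] [IsTopologicalAddGroup V] [ContinuousSMul ℝ V] [T2Space V]
    (B : ℕ → V →ₗ[ℝ] V →ₗ[ℝ] V) (C : V →ₗ[ℝ] V →ₗ[ℝ] V)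
    (hB : ∀ x y, Tendsto (fun p => B p x y) atTop (nhds (C x y)))
    {x y : V} {xs ys : ℕ → V} (hx : Tendsto xs atTop (nhds x))
    (hy : Tendsto ys atTop (nhds y)) :
    Tendsto (fun p => B p (xs p) (ys p)) atTop (nhds (C x y)) := by
  classical
  let b := Module.finBasis ℝ V
  have key : ∀ (D : V →ₗ[ℝ] V →ₗ[ℝ] V) (u v : V),
      D u v = ∑ i, ∑ j, (b.repr u i * b.repr v j) • D (b i) (b j) := by
    intro D u v
    conv_lhs => rw [← b.sum_repr u, ← b.sum_repr v]
    simp only [map_sum, map_smul, LinearMap.sum_apply, LinearMap.smul_apply,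
      Finset.smul_sum, smul_smul]
    rw [Finset.sum_comm]
    exact Finset.sum_congr rfl fun i _ => Finset.sum_congr rfl fun j _ => by rw [mul_comm]
  have hcoord : ∀ (i : Fin (finrank ℝ V)) {u : V} {us : ℕ → V},
      Tendsto us atTop (nhds u) → Tendsto (fun p => b.repr (us p) i) atTop (nhds (b.repr u i)) := by
    intro i u us hu
    have hc : Continuous (b.coord i) := (b.coord i).continuous_of_finiteDimensional
    simpa [Basis.coord_apply, Function.comp_def] using (hc.tendsto u).comp hu
  have : Tendsto (fun p => ∑ i, ∑ j,
      (b.repr (xs p) i * b.repr (ys p) j) • B p (b i) (b j)) atTop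
      (nhds (∑ i, ∑ j, (b.repr x i * b.repr y j) • C (b i) (b j))) := by
    refine tendsto_finset_sum _ fun i _ => tendsto_finset_sum _ fun j _ => ?_
    exact Tendsto.smul ((hcoord i hx).mul (hcoord j hy)) (hB (b i) (b j))
  rw [key C x y]
  simpa only [← key] using this

section Nested

variable {M : Type*} [LieRing M] [LieAlgebra ℝ M]

lemma nested_mem_lcs (xs : List M) (m : M) :
    nestedF (fun a b : M => ⁅a, b⁆) xs m ∈ LieModule.lowerCentralSeries ℝ M M xs.length := by
  induction xs with
  | nil => simp [nestedF]
  | cons x xs ih =>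
    rw [List.length_cons, LieModule.lowerCentralSeries_succ]
    exact LieSubmodule.lie_mem_lie (LieSubmodule.mem_top x) ih

set_option maxHeartbeats 1000000 in
lemma lcs_le_span (k : ℕ) :
    LieSubmodule.toSubmodule (LieModule.lowerCentralSeries ℝ M M k) ≤
      Submodule.span ℝ {z : M | ∃ xs m, xs.length = k ∧ nestedF (fun a b : M => ⁅a, b⁆) xs m = z} := by
  induction k with
  | zero =>
    intro z _
    exact Submodule.subset_span ⟨[], z, rfl, rfl⟩
  | succ k ih =>
    rw [LieModule.lowerCentralSeries_succ, LieSubmodule.lieIdeal_oper_eq_linear_span',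
      Submodule.span_le]
    rintro z ⟨x, -, n, hn, rfl⟩
    have hn' := ih ((LieSubmodule.mem_toSubmodule _).mpr hn)
    have hmem : (LieAlgebra.ad ℝ M x) n ∈ Submodule.map (LieAlgebra.ad ℝ M x)
        (Submodule.span ℝ {z : M | ∃ xs m, xs.length = k ∧ nestedF (fun a b : M => ⁅a, b⁆) xs m = z}) :=
      Submodule.mem_map_of_mem hn'
    rw [Submodule.map_span] at hmem
    have hsub : (LieAlgebra.ad ℝ M x) ''
          {z : M | ∃ xs m, xs.length = k ∧ nestedF (fun a b : M => ⁅a, b⁆) xs m = z}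
        ⊆ {z : M | ∃ xs m, xs.length = k + 1 ∧ nestedF (fun a b : M => ⁅a, b⁆) xs m = z} := by
      rintro - ⟨w, ⟨xs, m, hlen, rfl⟩, rfl⟩
      exact ⟨x :: xs, m, by simp [hlen], rfl⟩
    have := Submodule.span_mono hsub hmem
    simpa [LieAlgebra.ad_apply] using this

end Nested

open LieModule in
/-- Under a sequential contraction, nilpotency is preserved and the nilpotency rank does not
increase. -/
theorem nilpotent_of_contraction {L L₀ : Type*} [LieRing L] [LieAlgebra ℝ L] [LieRing L₀] [LieAlgebra ℝ L₀]
    [Module.Finite ℝ L] [Module.Finite ℝ L₀]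
    [TopologicalSpace L₀] [IsTopologicalAddGroup L₀] [ContinuousSMul ℝ L₀] [T2Space L₀]
    (h : IsSequentialContraction L L₀) :
    (LieRing.IsNilpotent L → LieRing.IsNilpotent L₀) ∧
    (∀ l : ℕ, lowerCentralSeries ℝ L L l = ⊥ → lowerCentralSeries ℝ L₀ L₀ l = ⊥) := by
  obtain ⟨T, hT⟩ := h
  let B : ℕ → L₀ →ₗ[ℝ] L₀ →ₗ[ℝ] L₀ := fun p =>
    LinearMap.mk₂ ℝ (fun x y => T p ⁅(T p).symm x, (T p).symm y⁆)
      (fun a b c => by simp [add_lie])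
      (fun t a c => by simp [smul_lie])
      (fun a b c => by simp [lie_add])
      (fun t a c => by simp [lie_smul])
  let C : L₀ →ₗ[ℝ] L₀ →ₗ[ℝ] L₀ :=
    LinearMap.mk₂ ℝ (fun x y : L₀ => ⁅x, y⁆)
      (fun a b c => add_lie a b c) (fun t a c => smul_lie t a c)
      (fun a b c => lie_add a b c) (fun t a c => lie_smul t a c)
  have hB : ∀ x y : L₀, Tendsto (fun p => B p x y) atTop (nhds (C x y)) := fun x y => hT x y
  -- convergence of nested brackets
  have claim1 : ∀ (xs : List L₀) (m : L₀),
      Tendsto (fun p => nestedF (fun a b => B p a b) xs m) atTop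
        (nhds (nestedF (fun a b : L₀ => ⁅a, b⁆) xs m)) := by
    intro xs m
    induction xs with
    | nil => exact tendsto_const_nhds
    | cons x xs ih =>
      exact tendsto_bilin B C hB tendsto_const_nhds ih
  -- nested transported brackets are conjugates of nested brackets in L
  have claim2 : ∀ (p : ℕ) (xs : List L₀) (m : L₀),
      nestedF (fun a b => B p a b) xs m =
        T p (nestedF (fun a b : L => ⁅a, b⁆) (xs.map (T p).symm) ((T p).symm m)) := by
    intro p xs m
    induction xs with
    | nil => simp [nestedF]
    | cons x xs ih =>
      simp only [nestedF, List.map_cons, ih]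
      show T p ⁅(T p).symm x, (T p).symm (T p _)⁆ = _
      rw [LinearEquiv.symm_apply_apply]
  have main : ∀ l : ℕ, lowerCentralSeries ℝ L L l = ⊥ → lowerCentralSeries ℝ L₀ L₀ l = ⊥ := by
    intro l hl
    have vanishL : ∀ (xs : List L), xs.length = l → ∀ m : L,
        nestedF (fun a b : L => ⁅a, b⁆) xs m = 0 := by
      intro xs hlen m
      have := nested_mem_lcs xs m
      rw [hlen, hl, LieSubmodule.mem_bot] at this
      exact this
    have vanish : ∀ (xs : List L₀), xs.length = l → ∀ m : L₀,
        nestedF (fun a b : L₀ => ⁅a, b⁆) xs m = 0 := by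
      intro xs hlen m
      have hzero : ∀ p : ℕ, nestedF (fun a b => B p a b) xs m = 0 := by
        intro p
        rw [claim2 p xs m, vanishL _ (by simp [hlen]) _, map_zero]
      have := claim1 xs m
      rw [funext hzero] at this
      exact tendsto_nhds_unique this tendsto_const_nhds
    rw [LieSubmodule.eq_bot_iff]
    intro m hm
    have : m ∈ Submodule.span ℝ
        {z : L₀ | ∃ xs m', xs.length = l ∧ nestedF (fun a b : L₀ => ⁅a, b⁆) xs m' = z} :=
      lcs_le_span l ((LieSubmodule.mem_toSubmodule _).mpr hm)
    have hS : {z : L₀ | ∃ xs m', xs.length = l ∧ nestedF (fun a b : L₀ => ⁅a, b⁆) xs m' = z}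
        ⊆ {(0 : L₀)} := by
      rintro z ⟨xs, m', hlen, rfl⟩
      exact vanish xs hlen m'
    have := Submodule.span_mono hS this
    simpa using this
  refine ⟨fun hnil => ?_, main⟩
  obtain ⟨k, hk⟩ := (LieModule.isNilpotent_iff ℝ L L).mp hnil
  exact (LieModule.isNilpotent_iff ℝ L₀ L₀).mpr ⟨k, main k hk⟩
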